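/- Let N, n, m, q be natural numbers with n = m + q, q ≥ 1 and N > 2n − m. Let b ∈ ℝ^{q+1} be nonzero, c ∈ ℝ^{m+1}, a = c ⋆ b ∈ ℝ^{n+1}, and let ŷ ∈ ℝ^N satisfy T_{N−n}(a) ŷ = 0 and rank(T_{N−n}(c) H_q(ŷ)) = q. Then the left null space of the filtered Hankel matrix equals the row space of T_{N−2n+m}(b): for every λ ∈ ℝ^{N−n} with λᵀ T_{N−n}(c) H_q(ŷ) = 0 there exists g ∈ ℝ^{N−2n+m} such that λ = T_{N−2n+m}(b)ᵀ g. -/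
import Mathlib


open Matrix

/-- Banded Toeplitz matrix `T_k(a)` of a coefficient vector `a = (a_n, …, a_1, a_0)`:
entry `(i,j)` equals the coefficient `a_{n-(j-i)}` (vector component `j - i`, since
component `t` of the vector is the coefficient `a_{n-t}`) when `0 ≤ j - i ≤ n`, else `0`.
The number of columns is passed explicitly (intended: `N = k + n`). -/
def toep {R : Type*} [Semiring R] (k N n : ℕ) (a : Fin (n + 1) → R) :
    Matrix (Fin k) (Fin N) R :=
  Matrix.of fun i j =>
    if h : i.val ≤ j.val ∧ j.val - i.val ≤ n then a ⟨j.val - i.val, by omega⟩ else 0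

/-- Hankel matrix `H_q(y) ∈ R^{(N-q) × (q+1)}` with entries `(H_q(y))_{i,j} = y_{i+j}` (0-based). -/
def hank {R : Type*} [Semiring R] (N q : ℕ) (y : Fin N → R) :
    Matrix (Fin (N - q)) (Fin (q + 1)) R :=
  Matrix.of fun i j => y ⟨i.val + j.val, by have hi := i.isLt; have hj := j.isLt; omega⟩

/-- Convolution of coefficient vectors: `(c ⋆ b)_k = Σ_{i+j=k} c_i b_j`. -/
def convVec {R : Type*} [Semiring R] (m q : ℕ) (c : Fin (m + 1) → R) (b : Fin (q + 1) → R) :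
    Fin (m + q + 1) → R :=
  fun k => ∑ i : Fin (m + 1), ∑ j : Fin (q + 1), if i.val + j.val = k.val then c i * b j else 0

lemma band_eq_sum {n : ℕ} (a : Fin (n+1) → ℝ) (i jv : ℕ) :
    (if h : i ≤ jv ∧ jv - i ≤ n then a ⟨jv - i, by omega⟩ else 0)
      = ∑ u : Fin (n+1), if jv = i + u then a u else 0 := by
  split_ifs with h
  · rw [Finset.sum_eq_single (⟨jv - i, by omega⟩ : Fin (n+1))]
    · simp [Nat.add_sub_cancel' h.1]
    · intro u _ hu
      rw [if_neg]
      intro hc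
      exact hu (by ext; simp [hc])
    · simp
  · refine (Finset.sum_eq_zero fun u _ => ?_).symm
    rw [if_neg]
    intro hc
    exact h ⟨by omega, by have := u.isLt; omega⟩

lemma sum_fin_collapse {K : ℕ} (w : ℕ) (hw : w < K) (g : Fin K → ℝ) :
    ∑ s : Fin K, (if (s : ℕ) = w then g s else 0) = g ⟨w, hw⟩ := by
  rw [Finset.sum_eq_single (⟨w, hw⟩ : Fin K)]
  · simp
  · intro s _ hs
    rw [if_neg]
    intro hc
    exact hs (by ext; simpa using hc)
  · simp

lemma sum_band {K n : ℕ} (a : Fin (n+1) → ℝ) (i0 : ℕ) (h : i0 + n < K) (v : Fin K → ℝ) :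
    ∑ s : Fin K, (if hs : i0 ≤ (s:ℕ) ∧ (s:ℕ) - i0 ≤ n then a ⟨(s:ℕ) - i0, by omega⟩ else 0) * v s
      = ∑ u : Fin (n+1), a u * v ⟨i0 + u, by have := u.isLt; omega⟩ := by
  have : ∀ s : Fin K,
      (if hs : i0 ≤ (s:ℕ) ∧ (s:ℕ) - i0 ≤ n then a ⟨(s:ℕ) - i0, by omega⟩ else 0) * v s
      = ∑ u : Fin (n+1), if (s:ℕ) = i0 + u then a u * v s else 0 := by
    intro s
    rw [band_eq_sum, Finset.sum_mul]
    exact Finset.sum_congr rfl fun u _ => by rw [ite_mul, zero_mul]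
  rw [Finset.sum_congr rfl fun s _ => this s, Finset.sum_comm]
  refine Finset.sum_congr rfl fun u _ => ?_
  have hu := u.isLt
  rw [sum_fin_collapse (i0 + u) (by omega)]

lemma toep_mul_toep {k K2 K3 q m : ℕ} (hk : k + q ≤ K2)
    (b : Fin (q+1) → ℝ) (c : Fin (m+1) → ℝ) :
    toep k K2 q b * toep K2 K3 m c = toep k K3 (m + q) (convVec m q c b) := by
  ext i j
  have hi := i.isLt
  rw [Matrix.mul_apply]
  show (∑ s : Fin K2,
      (if hs : (i:ℕ) ≤ (s:ℕ) ∧ (s:ℕ) - (i:ℕ) ≤ q then b ⟨(s:ℕ) - (i:ℕ), by omega⟩ else 0)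
        * toep K2 K3 m c s j) = _
  rw [sum_band b (i:ℕ) (by omega)]
  show (∑ u : Fin (q+1), b u *
      (if hs : (i:ℕ) + (u:ℕ) ≤ (j:ℕ) ∧ (j:ℕ) - ((i:ℕ) + (u:ℕ)) ≤ m then
        c ⟨(j:ℕ) - ((i:ℕ) + (u:ℕ)), by omega⟩ else 0)) = _
  have lhs_eq : ∀ u : Fin (q+1), b u *
      (if hs : (i:ℕ) + (u:ℕ) ≤ (j:ℕ) ∧ (j:ℕ) - ((i:ℕ) + (u:ℕ)) ≤ m then
        c ⟨(j:ℕ) - ((i:ℕ) + (u:ℕ)), by omega⟩ else 0)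
      = ∑ p : Fin (m+1), if (j:ℕ) = (i:ℕ) + (u:ℕ) + (p:ℕ) then b u * c p else 0 := by
    intro u
    rw [band_eq_sum, Finset.mul_sum]
    exact Finset.sum_congr rfl fun p _ => by rw [mul_ite, mul_zero]
  rw [Finset.sum_congr rfl fun u _ => lhs_eq u]
  -- RHS
  show _ = (if h : (i:ℕ) ≤ (j:ℕ) ∧ (j:ℕ) - (i:ℕ) ≤ m + q then
      convVec m q c b ⟨(j:ℕ) - (i:ℕ), by omega⟩ else 0)
  split_ifs with h
  · show _ = ∑ p : Fin (m+1), ∑ r : Fin (q+1),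
      if (p:ℕ) + (r:ℕ) = (j:ℕ) - (i:ℕ) then c p * b r else 0
    rw [Finset.sum_comm]
    refine Finset.sum_congr rfl fun p _ => Finset.sum_congr rfl fun r _ => ?_
    exact if_congr (by omega) (mul_comm _ _) rfl
  · refine Finset.sum_eq_zero fun r _ => Finset.sum_eq_zero fun p _ => ?_
    rw [if_neg]
    have := r.isLt; have := p.isLt
    omega

lemma toepA_mul_hank {N m q : ℕ} (hq : 1 ≤ q) (hN : m + 2*q < N)
    (a : Fin (m+q+1) → ℝ) (y : Fin N → ℝ)
    (hy : toep (N - (m+q)) N (m+q) a *ᵥ y = 0) :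
    toep (N - (m+2*q)) (N - q) (m+q) a * hank N q y = 0 := by
  ext i j
  have hi := i.isLt; have hj := j.isLt
  have hrow := congrFun hy ⟨(i:ℕ) + (j:ℕ), by omega⟩
  rw [Matrix.mulVec, dotProduct] at hrow
  show (∑ s : Fin (N-q),
      (if hs : (i:ℕ) ≤ (s:ℕ) ∧ (s:ℕ) - (i:ℕ) ≤ m+q then a ⟨(s:ℕ) - (i:ℕ), by omega⟩ else 0)
        * hank N q y s j) = 0
  have hthis : (∑ t : Fin N,
      (if ht : (i:ℕ)+(j:ℕ) ≤ (t:ℕ) ∧ (t:ℕ) - ((i:ℕ)+(j:ℕ)) ≤ m+q then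
        a ⟨(t:ℕ) - ((i:ℕ)+(j:ℕ)), by omega⟩ else 0) * y t) = 0 := hrow
  rw [sum_band a ((i:ℕ)+(j:ℕ)) (by omega)] at hthis
  rw [sum_band a (i:ℕ) (by omega)]
  rw [← hthis]
  refine Finset.sum_congr rfl fun u _ => ?_
  congr 1
  show y _ = y _
  congr 1
  ext
  simp
  omega

lemma toep_vecMul_inj {k K q : ℕ} (hK : k + q ≤ K) (b : Fin (q+1) → ℝ) (hb : b ≠ 0)
    (g : Fin k → ℝ) (hg : g ᵥ* toep k K q b = 0) : g = 0 := by
  have hex : ∃ t : ℕ, ∃ h : t < q + 1, b ⟨t, h⟩ ≠ 0 := by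
    by_contra hc
    push_neg at hc
    exact hb (funext fun t => hc t.1 t.2)
  classical
  obtain ⟨t0, ht0lt, ht0, hmin⟩ : ∃ t0 : ℕ, ∃ h : t0 < q + 1, b ⟨t0, h⟩ ≠ 0 ∧
      ∀ tv : ℕ, tv < t0 → ∀ h' : tv < q + 1, b ⟨tv, h'⟩ = 0 := by
    refine ⟨Nat.find hex, (Nat.find_spec hex).1, (Nat.find_spec hex).2, ?_⟩
    intro tv htv h'
    by_contra hc
    have : ∃ h : tv < q + 1, b ⟨tv, h⟩ ≠ 0 := ⟨h', hc⟩
    exact absurd htv (not_lt.mpr (Nat.find_le this))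
  have key : ∀ iv : ℕ, ∀ h : iv < k, g ⟨iv, h⟩ = 0 := by
    intro iv
    induction iv using Nat.strong_induction_on with
    | _ iv IH =>
      intro h
      have hltK : iv + t0 < K := by omega
      have hcol := congrFun hg ⟨iv + t0, hltK⟩
      rw [Matrix.vecMul, dotProduct] at hcol
      have : (∑ i' : Fin k, g i' * toep k K q b i' ⟨iv + t0, hltK⟩)
          = g ⟨iv, h⟩ * b ⟨t0, ht0lt⟩ := by
        rw [Finset.sum_eq_single (⟨iv, h⟩ : Fin k)]
        · show g ⟨iv, h⟩ * (if hh : iv ≤ iv + t0 ∧ iv + t0 - iv ≤ q then _ else 0) = _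
          rw [dif_pos ⟨by omega, by omega⟩]
          congr 1
          exact congrArg b (Fin.ext (by simp only [Fin.val_mk]; omega))
        · intro i' _ hi'
          show g i' * (if hh : (i':ℕ) ≤ iv + t0 ∧ iv + t0 - (i':ℕ) ≤ q then
              b ⟨iv + t0 - (i':ℕ), by omega⟩ else 0) = 0
          rcases lt_trichotomy (i':ℕ) iv with hlt | heq | hgt
          · rw [IH _ hlt i'.isLt, zero_mul]
          · exact absurd (Fin.ext heq) hi'
          · split_ifs with hh
            · rw [hmin (iv + t0 - (i':ℕ)) (by omega), mul_zero]
            · rw [mul_zero]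
        · simp
      rw [this] at hcol
      have hcol0 : g ⟨iv, h⟩ * b ⟨t0, ht0lt⟩ = 0 := hcol
      exact (mul_eq_zero.mp hcol0).resolve_right ht0
  funext i
  have := key i.1 i.2
  simpa using this

theorem stmt13 (N m q : ℕ) (hq : 1 ≤ q) (hN : m + 2 * q < N)
    (b : Fin (q + 1) → ℝ) (hb : b ≠ 0) (c : Fin (m + 1) → ℝ) (yhat : Fin N → ℝ)
    (hy : toep (N - (m + q)) N (m + q) (convVec m q c b) *ᵥ yhat = 0)
    (hrank : (toep (N - (m + q)) (N - q) m c * hank N q yhat).rank = q) :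
    ∀ lam : Fin (N - (m + q)) → ℝ,
      lam ᵥ* (toep (N - (m + q)) (N - q) m c * hank N q yhat) = 0 →
      ∃ g : Fin (N - (m + 2 * q)) → ℝ,
        lam = (toep (N - (m + 2 * q)) (N - (m + q)) q b)ᵀ *ᵥ g := by
  intro lam hlam
  classical
  set M := toep (N - (m + q)) (N - q) m c * hank N q yhat with hM
  set T := toep (N - (m + 2 * q)) (N - (m + q)) q b with hT
  have hTM : T * M = 0 := by
    rw [hM, hT, ← Matrix.mul_assoc, toep_mul_toep (by omega) b c]
    exact toepA_mul_hank hq hN _ yhat hy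
  let f : (Fin (N - (m + q)) → ℝ) →ₗ[ℝ] (Fin (q + 1) → ℝ) := Mᵀ.mulVecLin
  have hker : lam ∈ LinearMap.ker f := by
    show Mᵀ *ᵥ lam = 0
    rw [Matrix.mulVec_transpose]
    exact hlam
  have hWle : LinearMap.range (Tᵀ.mulVecLin) ≤ LinearMap.ker f := by
    rintro x ⟨g, rfl⟩
    show Mᵀ *ᵥ (Tᵀ *ᵥ g) = 0
    rw [Matrix.mulVec_mulVec, ← Matrix.transpose_mul, hTM]
    simp
  have hinj : Function.Injective (Tᵀ.mulVecLin) := by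
    rw [← LinearMap.ker_eq_bot, LinearMap.ker_eq_bot']
    intro g hg0
    have : g ᵥ* T = 0 := by
      rw [← Matrix.mulVec_transpose]
      exact hg0
    exact toep_vecMul_inj (by omega) b hb g this
  have hWfr : Module.finrank ℝ (LinearMap.range (Tᵀ.mulVecLin)) = N - (m + 2 * q) := by
    rw [LinearMap.finrank_range_of_inj hinj]
    simp
  have hrk : Module.finrank ℝ (LinearMap.range f) = q := by
    have : Mᵀ.rank = q := by rw [Matrix.rank_transpose]; exact hrank
    exact this
  have hfr : Module.finrank ℝ (LinearMap.ker f) = N - (m + q) - q := by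
    have h1 := LinearMap.finrank_range_add_finrank_ker f
    rw [hrk] at h1
    simp only [Module.finrank_fintype_fun_eq_card, Fintype.card_fin] at h1
    omega
  have heq : LinearMap.range (Tᵀ.mulVecLin) = LinearMap.ker f := by
    apply Submodule.eq_of_le_of_finrank_le hWle
    rw [hfr, hWfr]
    omega
  rw [← heq] at hker
  obtain ⟨g, hg⟩ := hker
  exact ⟨g, hg.symm⟩
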